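/- Let a node u have outgoing transition probabilities p₁ ≥ p₂ ≥ ... ≥ p_n ≥ 0 with ∑ p_i = 1. For a subset D ⊆ {1,...,n} with |D| = m < n and ∑_{i∈D} p_i < 1, define g(D) = (1 − ρ(D)) ∑_{i∉D} (p_i/(1−ρ(D)))(1 − p_i/(1−ρ(D))) where ρ(D) = ∑_{i∈D} p_i. Then g is minimized over all subsets of size m by D* = {1,...,m}, the set of m largest probabilities. -/

import Mathlib

open Finset

private lemma card_Ds {n : ℕ} (m : ℕ) (hm : m < n) :
    (univ.filter (fun i : Fin n => (i : ℕ) < m)).card = m := by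
  have : (univ.filter (fun i : Fin n => (i:ℕ) < m)) =
      (univ : Finset (Fin m)).map ⟨Fin.castLE hm.le, Fin.castLE_injective hm.le⟩ := by
    ext i
    simp only [mem_filter, mem_univ, true_and, mem_map, Function.Embedding.coeFn_mk]
    constructor
    · intro h; exact ⟨⟨i, h⟩, rfl⟩
    · rintro ⟨j, rfl⟩; exact j.isLt
  rw [this, card_map, card_univ, Fintype.card_fin]

/-- Any `m`-subset has sum at most the top-`m` set. -/
private lemma topm_max {n : ℕ} (p : Fin n → ℝ)
    (hsorted : ∀ i j : Fin n, i ≤ j → p j ≤ p i) (m : ℕ) (hm : m < n)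
    (D : Finset (Fin n)) (hcard : D.card = m) :
    ∑ i ∈ D, p i ≤ ∑ i ∈ univ.filter (fun i : Fin n => (i : ℕ) < m), p i := by
  set Ds := univ.filter (fun i : Fin n => (i : ℕ) < m) with hDs
  set pm := p ⟨m, hm⟩ with hpm
  have h1 : ∑ i ∈ D ∩ Ds, p i + ∑ i ∈ D \ Ds, p i = ∑ i ∈ D, p i :=
    sum_inter_add_sum_sdiff D Ds p
  have h2 : ∑ i ∈ Ds ∩ D, p i + ∑ i ∈ Ds \ D, p i = ∑ i ∈ Ds, p i :=
    sum_inter_add_sum_sdiff Ds D p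
  have hc1 : (D \ Ds).card + (D ∩ Ds).card = m := by rw [card_sdiff_add_card_inter, hcard]
  have hc2 : (Ds \ D).card + (Ds ∩ D).card = m := by
    rw [card_sdiff_add_card_inter, card_Ds m hm]
  have hcc : (D \ Ds).card = (Ds \ D).card := by
    rw [inter_comm] at hc1; omega
  have hFle : ∀ j ∈ D \ Ds, p j ≤ pm := by
    intro j hj
    have hj' : ¬ (j : ℕ) < m := by
      intro h
      exact (mem_sdiff.1 hj).2 (by rw [hDs]; exact mem_filter.2 ⟨mem_univ _, h⟩)
    exact hsorted ⟨m, hm⟩ j (by simpa [Fin.le_def] using Nat.le_of_not_lt hj')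
  have hEge : ∀ i ∈ Ds \ D, pm ≤ p i := by
    intro i hi
    have hi' : (i : ℕ) < m := by
      have h := (mem_sdiff.1 hi).1; rw [hDs] at h; exact (mem_filter.1 h).2
    exact hsorted i ⟨m, hm⟩ (by simpa [Fin.le_def] using hi'.le)
  have key : ∑ i ∈ D \ Ds, p i ≤ ∑ i ∈ Ds \ D, p i := by
    calc ∑ i ∈ D \ Ds, p i ≤ (D \ Ds).card • pm := sum_le_card_nsmul _ _ _ hFle
    _ = (Ds \ D).card • pm := by rw [hcc]
    _ ≤ ∑ i ∈ Ds \ D, p i := card_nsmul_le_sum _ _ _ hEge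
  have hint : ∑ i ∈ D ∩ Ds, p i = ∑ i ∈ Ds ∩ D, p i := by rw [inter_comm]
  linarith

/-- Main induction: the top-m set minimizes `s - Q/s`. -/
private lemma aux_ind {n : ℕ} (p : Fin n → ℝ) (hnonneg : ∀ i, 0 ≤ p i)
    (hsorted : ∀ i j : Fin n, i ≤ j → p j ≤ p i)
    (m : ℕ) (hm : m < n)
    (ha : 0 < 1 - ∑ i ∈ univ.filter (fun i : Fin n => (i : ℕ) < m), p i) :
    ∀ (k : ℕ) (D : Finset (Fin n)), D.card = m →
      (D \ univ.filter (fun i : Fin n => (i : ℕ) < m)).card = k →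
    (1 - ∑ i ∈ univ.filter (fun i : Fin n => (i : ℕ) < m), p i) -
        (∑ i ∈ univ \ univ.filter (fun i : Fin n => (i : ℕ) < m), p i ^ 2) /
          (1 - ∑ i ∈ univ.filter (fun i : Fin n => (i : ℕ) < m), p i)
      ≤ (1 - ∑ i ∈ D, p i) - (∑ i ∈ univ \ D, p i ^ 2) / (1 - ∑ i ∈ D, p i) := by
  set Ds := univ.filter (fun i : Fin n => (i : ℕ) < m) with hDs
  intro k
  induction k with
  | zero =>
    intro D hcard hk
    have hsub : D ⊆ Ds := sdiff_eq_empty_iff_subset.1 (card_eq_zero.1 hk)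
    have : D = Ds := eq_of_subset_of_card_le hsub (by rw [hcard, card_Ds m hm])
    rw [this]
  | succ k ih =>
    intro D hcard hk
    have hDne : (D \ Ds).Nonempty := card_pos.1 (by omega)
    obtain ⟨j, hj⟩ := hDne
    have hcEF : (Ds \ D).card = k + 1 := by
      have h1 : (D \ Ds).card + (D ∩ Ds).card = m := by rw [card_sdiff_add_card_inter, hcard]
      have h2 : (Ds \ D).card + (Ds ∩ D).card = m := by
        rw [card_sdiff_add_card_inter, card_Ds m hm]
      rw [inter_comm] at h1; omega
    obtain ⟨i, hi⟩ := card_pos.1 (by omega : 0 < (Ds \ D).card)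
    have hiDs : i ∈ Ds := (mem_sdiff.1 hi).1
    have hiD : i ∉ D := (mem_sdiff.1 hi).2
    have hjD : j ∈ D := (mem_sdiff.1 hj).1
    have hjDs : j ∉ Ds := (mem_sdiff.1 hj).2
    have hij : i ≠ j := fun h => hjDs (h ▸ hiDs)
    have hilt : (i : ℕ) < m := by
      have h := hiDs; rw [hDs] at h; exact (mem_filter.1 h).2
    have hjge : m ≤ (j : ℕ) := by
      by_contra h
      exact hjDs (by rw [hDs]; exact mem_filter.2 ⟨mem_univ _, Nat.lt_of_not_le h⟩)
    have hpji : p j ≤ p i := hsorted i j (by rw [Fin.le_def]; omega)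
    set D' := insert i (D.erase j) with hD'
    have hiej : i ∉ D.erase j := fun h => hiD (mem_of_mem_erase h)
    have hm1 : 0 < m := hcard ▸ card_pos.2 ⟨j, hjD⟩
    have hcard' : D'.card = m := by
      rw [hD', card_insert_of_notMem hiej, card_erase_of_mem hjD, hcard]
      omega
    have hk' : (D' \ Ds).card = k := by
      have hset : D' \ Ds = (D \ Ds).erase j := by
        ext x
        simp only [hD', mem_sdiff, mem_insert, mem_erase]
        constructor
        · rintro ⟨rfl | ⟨h1, h2⟩, h3⟩
          · exact absurd hiDs h3
          · exact ⟨h1, h2, h3⟩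
        · rintro ⟨h1, h2, h3⟩
          exact ⟨Or.inr ⟨h1, h2⟩, h3⟩
      rw [hset, card_erase_of_mem hj, hk]
      omega
    have hsum' : ∑ x ∈ D', p x = ∑ x ∈ D, p x + p i - p j := by
      rw [hD', sum_insert hiej, sum_erase_eq_sub hjD]; ring
    have hcompl : univ \ D' = insert j ((univ \ D).erase i) := by
      ext x
      simp only [mem_sdiff, mem_univ, true_and, mem_insert, mem_erase, hD']
      constructor
      · intro hx
        by_cases hxj : x = j
        · exact Or.inl hxj
        · refine Or.inr ⟨?_, ?_⟩
          · intro hxi; exact hx (Or.inl hxi)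
          · intro hxD; exact hx (Or.inr ⟨hxj, hxD⟩)
      · rintro (rfl | ⟨h1, h2⟩) <;> rintro (h | ⟨h3, h4⟩)
        · exact hij h.symm
        · exact h3 rfl
        · exact h1 h
        · exact h2 h4
    have hiU : i ∈ univ \ D := mem_sdiff.2 ⟨mem_univ i, hiD⟩
    have hjnU : j ∉ (univ \ D).erase i := fun h =>
      (mem_sdiff.1 (mem_of_mem_erase h)).2 hjD
    have hspos : 0 < 1 - ∑ x ∈ D, p x :=
      lt_of_lt_of_le ha (by
        have := topm_max p hsorted m hm D hcard
        rw [← hDs] at this; linarith)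
    have hs'pos : 0 < 1 - ∑ x ∈ D', p x :=
      lt_of_lt_of_le ha (by
        have := topm_max p hsorted m hm D' hcard'
        rw [← hDs] at this; linarith)
    have hQpi : p i ^ 2 ≤ ∑ x ∈ univ \ D, p x ^ 2 :=
      single_le_sum (fun x _ => sq_nonneg (p x)) hiU
    have hswap : (1 - ∑ x ∈ D', p x) - (∑ x ∈ univ \ D', p x ^ 2) / (1 - ∑ x ∈ D', p x)
        ≤ (1 - ∑ x ∈ D, p x) - (∑ x ∈ univ \ D, p x ^ 2) / (1 - ∑ x ∈ D, p x) := by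
      have hQ' : ∑ x ∈ univ \ D', p x ^ 2
          = p j ^ 2 + (∑ x ∈ univ \ D, p x ^ 2 - p i ^ 2) := by
        rw [hcompl, sum_insert hjnU, sum_erase_eq_sub hiU]
      set s : ℝ := 1 - ∑ x ∈ D, p x with hs
      set Q : ℝ := ∑ x ∈ univ \ D, p x ^ 2 with hQ
      have e1 : (1 : ℝ) - ∑ x ∈ D', p x = s - (p i - p j) := by rw [hsum', hs]; ring
      have hs' : 0 < s - (p i - p j) := by rw [← e1]; exact hs'pos
      rw [e1, hQ']
      have h1 : s - (p i - p j) - (p j ^ 2 + (Q - p i ^ 2)) / (s - (p i - p j))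
          = ((s - (p i - p j)) ^ 2 - (p j ^ 2 + (Q - p i ^ 2))) / (s - (p i - p j)) := by
        field_simp
      have h2 : s - Q / s = (s ^ 2 - Q) / s := by field_simp
      rw [h1, h2, div_le_div_iff₀ hs' hspos]
      nlinarith [mul_nonneg (sub_nonneg.2 hpji) (sq_nonneg (s - p i)),
        mul_nonneg (sub_nonneg.2 hpji) (sub_nonneg.2 hQpi)]
    exact le_trans (ih D' hcard' hk') hswap

private lemma expand_g {n : ℕ} (p : Fin n → ℝ) (hsum : ∑ i, p i = 1)
    (S : Finset (Fin n)) (hc : (1 : ℝ) - ∑ i ∈ S, p i ≠ 0) :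
    (1 - ∑ i ∈ S, p i) *
        ∑ i ∈ univ \ S, (p i / (1 - ∑ j ∈ S, p j)) * (1 - p i / (1 - ∑ j ∈ S, p j))
      = (1 - ∑ i ∈ S, p i) - (∑ i ∈ univ \ S, p i ^ 2) / (1 - ∑ i ∈ S, p i) := by
  set c : ℝ := 1 - ∑ i ∈ S, p i with hcdef
  have hcompl : ∑ i ∈ univ \ S, p i = c := by
    rw [sum_sdiff_eq_sub (subset_univ S), hsum]
  rw [mul_sum]
  have hterm : ∀ i ∈ univ \ S, c * ((p i / c) * (1 - p i / c)) = p i - p i ^ 2 / c := by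
    intro i _
    field_simp
  rw [sum_congr rfl hterm, sum_sub_distrib, hcompl, ← sum_div]

theorem single_node_top_m_optimal {n : ℕ} (p : Fin n → ℝ)
    (hnonneg : ∀ i, 0 ≤ p i)
    (hsorted : ∀ i j : Fin n, i ≤ j → p j ≤ p i)
    (hsum : ∑ i, p i = 1)
    (m : ℕ) (hm : m < n)
    (D : Finset (Fin n)) (hcard : D.card = m) (hρ : ∑ i ∈ D, p i < 1) :
    (1 - ∑ i ∈ univ.filter (fun i : Fin n => (i : ℕ) < m), p i) *
        ∑ i ∈ univ.filter (fun i : Fin n => ¬ (i : ℕ) < m),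
          (p i / (1 - ∑ j ∈ univ.filter (fun j : Fin n => (j : ℕ) < m), p j)) *
            (1 - p i / (1 - ∑ j ∈ univ.filter (fun j : Fin n => (j : ℕ) < m), p j))
      ≤ (1 - ∑ i ∈ D, p i) *
        ∑ i ∈ univ \ D,
          (p i / (1 - ∑ j ∈ D, p j)) * (1 - p i / (1 - ∑ j ∈ D, p j)) := by
  have hfilter : univ.filter (fun i : Fin n => ¬ (i : ℕ) < m)
      = univ \ univ.filter (fun i : Fin n => (i : ℕ) < m) := by
    rw [filter_not]
  set Ds := univ.filter (fun i : Fin n => (i : ℕ) < m) with hDs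
  rw [hfilter]
  set b : ℝ := 1 - ∑ i ∈ D, p i with hb
  have hbpos : 0 < b := by rw [hb]; linarith
  have hBsum : ∑ i ∈ univ \ D, p i = b := by
    rw [sum_sdiff_eq_sub (subset_univ D), hsum, hb]
  have ha0 : 0 ≤ 1 - ∑ i ∈ Ds, p i := by
    have : ∑ i ∈ univ \ Ds, p i = 1 - ∑ i ∈ Ds, p i := by
      rw [sum_sdiff_eq_sub (subset_univ Ds), hsum]
    rw [← this]
    exact sum_nonneg fun i _ => hnonneg i
  -- RHS in g-form
  have hRHS : b * ∑ i ∈ univ \ D, (p i / b) * (1 - p i / b)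
      = b - (∑ i ∈ univ \ D, p i ^ 2) / b := expand_g p hsum D (ne_of_gt hbpos)
  rcases eq_or_lt_of_le ha0 with haz | hapos
  · -- top-m sum is 1 : LHS = 0, RHS ≥ 0
    rw [← haz, zero_mul]
    have hterm : ∀ i ∈ univ \ D, 0 ≤ (p i / b) * (1 - p i / b) := by
      intro i hiB
      have hple : p i ≤ b := hBsum ▸ single_le_sum (fun x _ => hnonneg x) hiB
      have h1 : 0 ≤ p i / b := div_nonneg (hnonneg i) hbpos.le
      have h2 : p i / b ≤ 1 := (div_le_one hbpos).2 hple
      exact mul_nonneg h1 (by linarith)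
    exact mul_nonneg hbpos.le (sum_nonneg hterm)
  · have hLHS : (1 - ∑ i ∈ Ds, p i) *
        ∑ i ∈ univ \ Ds, (p i / (1 - ∑ j ∈ Ds, p j)) * (1 - p i / (1 - ∑ j ∈ Ds, p j))
        = (1 - ∑ i ∈ Ds, p i) - (∑ i ∈ univ \ Ds, p i ^ 2) / (1 - ∑ i ∈ Ds, p i) :=
      expand_g p hsum Ds (ne_of_gt hapos)
    rw [hLHS, hRHS, hb]
    exact aux_ind p hnonneg hsorted m hm (by rw [← hDs]; exact hapos)
      (D \ Ds).card D hcard rfl
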